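/- For every integer n ≥ 1, M_n is not a finitely generated M_0-module. Moreover the set M_∞ = ⋃_{n ≥ 0} M_n, which is the set of values of ν̄ on the nonzero elements of the ring K[x, y/x] (equivalently, of its localization B = K[x, y/x]_{(x, y/x)}), is not a finitely generated M_0-module. -/

import Mathlib

open MvPolynomial

/-- `β̄_0 = 1`, `β̄_{i+1} = 2β̄_i + 1/2^{i+1}`, so `β̄_i = (2^{i+2} - 2^{-i})/3`. -/
noncomputable def betaSeq : ℕ → ℚ
  | 0 => 1
  | (i + 1) => 2 * betaSeq i + 1 / 2 ^ (i + 1)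

/-- The generating sequence `P_0 = x`, `P_1 = y`, `P_{i+1} = P_i² - x^{2^{i+1}}·P_{i-1}`. -/
noncomputable def Ppoly (K : Type) [Field K] : ℕ → MvPolynomial (Fin 2) K
  | 0 => X 0
  | 1 => X 1
  | (i + 2) => (Ppoly K (i + 1)) ^ 2 - (X 0) ^ (2 ^ (i + 2)) * Ppoly K i

/-- The rational function field `K(x,y)`. -/
abbrev Kxy (K : Type) [Field K] := FractionRing (MvPolynomial (Fin 2) K)

/-- `W_n = {a_0 + a_1·(y/x) + ⋯ + a_n·(y/x)^n ∣ a_0, …, a_n ∈ K[x,y]} ⊆ K(x,y)`. -/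
noncomputable def Wset (K : Type) [Field K] (n : ℕ) : Set (Kxy K) :=
  {g | ∃ a : Fin (n + 1) → MvPolynomial (Fin 2) K,
    g = ∑ j : Fin (n + 1), algebraMap (MvPolynomial (Fin 2) K) (Kxy K) (a j) *
      (algebraMap (MvPolynomial (Fin 2) K) (Kxy K) (X 1) /
        algebraMap (MvPolynomial (Fin 2) K) (Kxy K) (X 0)) ^ (j : ℕ)}

/-- `M_n = {ν̄(f) ∣ f ∈ W_n, f ≠ 0}` for a valuation `v` on `K(x,y)`. -/
def Mset (K : Type) [Field K] (v : Kxy K → ℚ) (n : ℕ) : Set ℚ :=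
  {q | ∃ g ∈ Wset K n, g ≠ 0 ∧ v g = q}

/-- A subset `M ⊆ ℚ` is a finitely generated `M₀`-module if it is a finite union
`M = ⋃ (M₀ + m_i)` with `m_1, …, m_k ∈ M`. -/
def IsFinitelyGeneratedSemigroupModule (M₀ M : Set ℚ) : Prop :=
  ∃ T : Finset ℚ, (T : Set ℚ) ⊆ M ∧ M = ⋃ m ∈ T, {q : ℚ | ∃ μ ∈ M₀, q = μ + m}



noncomputable def Nseq : ℕ → ℤ
  | 0 => 1
  | (i + 1) => 4 * Nseq i + 1

lemma Nseq_odd (i : ℕ) : Odd (Nseq i) := by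
  induction i with
  | zero => exact ⟨0, rfl⟩
  | succ i ih => exact ⟨2 * Nseq i, by rw [Nseq]; ring⟩

lemma Nseq_pos (i : ℕ) : 0 < Nseq i := by
  induction i with
  | zero => norm_num [Nseq]
  | succ i ih => rw [Nseq]; omega

lemma betaSeq_eq (i : ℕ) : betaSeq i = (Nseq i : ℚ) / 2 ^ i := by
  induction i with
  | zero => norm_num [betaSeq, Nseq]
  | succ i ih =>
    rw [betaSeq, ih, Nseq]
    push_cast
    field_simp
    ring

lemma betaSeq_pos (i : ℕ) : 0 < betaSeq i := by
  induction i with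
  | zero => norm_num [betaSeq]
  | succ i ih => rw [betaSeq]; positivity

lemma betaSeq_mono {i j : ℕ} (h : i ≤ j) : betaSeq i ≤ betaSeq j := by
  induction j with
  | zero => simp_all
  | succ j ih =>
    rcases Nat.lt_or_ge i (j+1) with h' | h'
    · refine le_trans (ih (by omega)) ?_
      rw [betaSeq]
      have := betaSeq_pos j
      have : (0:ℚ) < 1 / 2 ^ (j+1) := by positivity
      linarith [betaSeq_pos j]
    · have : i = j + 1 := by omega
      simp [this]


lemma Ppoly_aeval (K : Type) [Field K] (i : ℕ) :
    aeval (![0, Polynomial.X] : Fin 2 → Polynomial K) (Ppoly K (i+1)) =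
      Polynomial.X ^ 2 ^ i := by
  induction i with
  | zero => simp [Ppoly]
  | succ i ih =>
    show aeval _ (Ppoly K (i + 2)) = _
    rw [Ppoly]
    simp only [map_sub, map_mul, map_pow, ih, aeval_X]
    have h0 : (![0, Polynomial.X] : Fin 2 → Polynomial K) 0 = 0 := rfl
    rw [h0, zero_pow (by positivity), zero_mul, sub_zero, ← pow_mul, ← pow_succ]

lemma Ppoly_ne_zero (K : Type) [Field K] (i : ℕ) : Ppoly K i ≠ 0 := by
  cases i with
  | zero => exact X_ne_zero 0
  | succ i =>
    intro h
    have := Ppoly_aeval K i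
    rw [h, map_zero] at this
    exact (pow_ne_zero _ Polynomial.X_ne_zero) this.symm

lemma Ppoly_mem_span (K : Type) [Field K] (i : ℕ) :
    Ppoly K i ∈ Ideal.span ({X 0, X 1} : Set (MvPolynomial (Fin 2) K)) := by
  have key : ∀ j : ℕ, Ppoly K j ∈ Ideal.span ({X 0, X 1} : Set (MvPolynomial (Fin 2) K)) ∧
      Ppoly K (j+1) ∈ Ideal.span ({X 0, X 1} : Set (MvPolynomial (Fin 2) K)) := by
    intro j
    induction j with
    | zero =>
      constructor
      · exact Ideal.subset_span (Or.inl (by rw [Ppoly]))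
      · exact Ideal.subset_span (Or.inr (by rw [Ppoly]; exact Set.mem_singleton _))
    | succ j ih =>
      refine ⟨ih.2, ?_⟩
      show Ppoly K (j + 2) ∈ _
      rw [Ppoly]
      refine sub_mem ?_ ?_
      · rw [sq]; exact Ideal.mul_mem_left _ _ ih.2
      · exact Ideal.mul_mem_left _ _ ih.1
  exact (key i).1



variable {K : Type} [Field K]

lemma phi_inj : Function.Injective (algebraMap (MvPolynomial (Fin 2) K) (Kxy K)) :=
  IsFractionRing.injective _ _

lemma phi_ne_zero {f : MvPolynomial (Fin 2) K} (hf : f ≠ 0) :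
    algebraMap (MvPolynomial (Fin 2) K) (Kxy K) f ≠ 0 := by
  simpa using (map_ne_zero_iff _ phi_inj).mpr hf

noncomputable def tK (K : Type) [Field K] : Kxy K :=
  algebraMap (MvPolynomial (Fin 2) K) (Kxy K) (X 1) /
    algebraMap (MvPolynomial (Fin 2) K) (Kxy K) (X 0)

lemma tK_ne_zero : tK K ≠ 0 :=
  div_ne_zero (phi_ne_zero (X_ne_zero 1)) (phi_ne_zero (X_ne_zero 0))

lemma mem_Wset_iff (n : ℕ) (g : Kxy K) :
    g ∈ Wset K n ↔ ∃ p : Polynomial (MvPolynomial (Fin 2) K), p.natDegree ≤ n ∧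
      Polynomial.eval₂ (algebraMap (MvPolynomial (Fin 2) K) (Kxy K)) (tK K) p = g := by
  constructor
  · rintro ⟨a, rfl⟩
    refine ⟨∑ j : Fin (n+1), Polynomial.C (a j) * Polynomial.X ^ (j : ℕ), ?_, ?_⟩
    · refine le_trans (Polynomial.natDegree_sum_le _ _) ?_
      simp only [Finset.fold_max_le]
      refine ⟨by omega, fun j _ => le_trans (Polynomial.natDegree_C_mul_le _ _) ?_⟩
      simp [Polynomial.natDegree_X_pow, Fin.is_le j]
    · rw [Polynomial.eval₂_finset_sum]
      refine Finset.sum_congr rfl fun j _ => ?_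
      rw [Polynomial.eval₂_mul, Polynomial.eval₂_C, Polynomial.eval₂_X_pow]
      rfl
  · rintro ⟨p, hp, rfl⟩
    refine ⟨fun j => p.coeff j, ?_⟩
    rw [Polynomial.eval₂_eq_sum_range' _ (lt_of_le_of_lt hp (Nat.lt_succ_self n)),
      ← Fin.sum_univ_eq_sum_range]
    rfl
open MvPolynomial

set_option linter.unusedSectionVars false

variable {K : Type} [Field K] {v : Kxy K → ℚ}
  (hmul : ∀ g h : Kxy K, g ≠ 0 → h ≠ 0 → v (g * h) = v g + v h)

include hmul

lemma v_one : v 1 = 0 := by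
  have := hmul 1 1 one_ne_zero one_ne_zero
  simp at this
  linarith

lemma v_inv {g : Kxy K} (hg : g ≠ 0) : v g⁻¹ = - v g := by
  have := hmul g g⁻¹ hg (inv_ne_zero hg)
  rw [mul_inv_cancel₀ hg, v_one hmul] at this
  linarith

lemma v_pow {g : Kxy K} (hg : g ≠ 0) (k : ℕ) : v (g ^ k) = k * v g := by
  induction k with
  | zero => simpa using v_one hmul
  | succ k ih =>
    rw [pow_succ, hmul _ _ (pow_ne_zero _ hg) hg, ih]
    push_cast; ring

section
variable (hβ : ∀ i : ℕ, v (algebraMap (MvPolynomial (Fin 2) K) (Kxy K) (Ppoly K i)) = betaSeq i)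
include hβ

lemma v_x : v (algebraMap (MvPolynomial (Fin 2) K) (Kxy K) (X 0)) = 1 := by
  have := hβ 0
  rw [show Ppoly K 0 = X 0 from rfl] at this
  simpa [betaSeq] using this

lemma v_t : v (tK K) = betaSeq 1 - 1 := by
  have h1 := hβ 1
  rw [show Ppoly K 1 = X 1 from rfl] at h1
  rw [tK, div_eq_mul_inv, hmul _ _ (phi_ne_zero (X_ne_zero 1))
    (inv_ne_zero (phi_ne_zero (X_ne_zero 0))), v_inv hmul (phi_ne_zero (X_ne_zero 0)),
    v_x hmul hβ, h1]
  ring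

lemma v_t_nonneg : 0 ≤ v (tK K) := by
  rw [v_t hmul hβ]
  norm_num [betaSeq]
end

lemma v_sum_nonneg (hadd : ∀ g h : Kxy K, g ≠ 0 → h ≠ 0 → g + h ≠ 0 → min (v g) (v h) ≤ v (g + h))
    {ι : Type*} (s : Finset ι) (c : ι → Kxy K)
    (h : ∀ j ∈ s, c j ≠ 0 → 0 ≤ v (c j)) (hs : (∑ j ∈ s, c j) ≠ 0) :
    0 ≤ v (∑ j ∈ s, c j) := by
  classical
  induction s using Finset.induction with
  | empty => simp at hs
  | insert _ _ hni ih =>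
    rename_i a s
    rw [Finset.sum_insert hni] at hs ⊢
    by_cases h1 : c a = 0
    · rw [h1, zero_add] at hs ⊢
      exact ih (fun j hj => h j (Finset.mem_insert_of_mem hj)) hs
    by_cases h2 : (∑ j ∈ s, c j) = 0
    · rw [h2, add_zero] at hs ⊢
      exact h a (Finset.mem_insert_self a s) h1
    · refine le_trans ?_ (hadd _ _ h1 h2 hs)
      exact le_min (h a (Finset.mem_insert_self a s) h1)
        (ih (fun j hj => h j (Finset.mem_insert_of_mem hj)) h2)

lemma Mset_nonneg
    (hadd : ∀ g h : Kxy K, g ≠ 0 → h ≠ 0 → g + h ≠ 0 → min (v g) (v h) ≤ v (g + h))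
    (hnonneg : ∀ f : MvPolynomial (Fin 2) K, f ≠ 0 →
      0 ≤ v (algebraMap (MvPolynomial (Fin 2) K) (Kxy K) f))
    (hβ : ∀ i : ℕ, v (algebraMap (MvPolynomial (Fin 2) K) (Kxy K) (Ppoly K i)) = betaSeq i)
    {n : ℕ} {g : Kxy K} (hg : g ∈ Wset K n) (hg0 : g ≠ 0) : 0 ≤ v g := by
  obtain ⟨a, rfl⟩ := hg
  refine v_sum_nonneg hmul hadd _ _ (fun j _ hj => ?_) hg0
  have haj : a j ≠ 0 := by
    intro h0; apply hj; simp [h0]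
  have htj : (tK K : Kxy K) ^ (j:ℕ) ≠ 0 := pow_ne_zero _ tK_ne_zero
  have : v (algebraMap (MvPolynomial (Fin 2) K) (Kxy K) (a j) * (tK K) ^ (j:ℕ)) =
      v (algebraMap (MvPolynomial (Fin 2) K) (Kxy K) (a j)) + (j:ℕ) * v (tK K) := by
    rw [hmul _ _ (phi_ne_zero haj) htj, v_pow hmul tK_ne_zero]
  rw [show (algebraMap (MvPolynomial (Fin 2) K) (Kxy K) (X 1) /
        algebraMap (MvPolynomial (Fin 2) K) (Kxy K) (X 0)) = tK K from rfl] at hj ⊢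
  rw [this]
  have h1 := hnonneg _ haj
  have h2 := v_t_nonneg hmul hβ
  positivity


set_option maxHeartbeats 1000000 in
lemma beta_sub_one_mem
    (hβ : ∀ i : ℕ, v (algebraMap (MvPolynomial (Fin 2) K) (Kxy K) (Ppoly K i)) = betaSeq i)
    {n : ℕ} (hn : 1 ≤ n) (i : ℕ) : betaSeq i - 1 ∈ Mset K v n := by
  obtain ⟨a, b, hab⟩ := Ideal.mem_span_pair.mp (Ppoly_mem_span K i)
  refine ⟨algebraMap (MvPolynomial (Fin 2) K) (Kxy K) (Ppoly K i) /
      algebraMap (MvPolynomial (Fin 2) K) (Kxy K) (X 0), ?_, ?_, ?_⟩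
  · rw [mem_Wset_iff]
    refine ⟨Polynomial.C a + Polynomial.C b * Polynomial.X, ?_, ?_⟩
    · refine le_trans (Polynomial.natDegree_add_le _ _) (max_le (by simp) ?_)
      exact le_trans (Polynomial.natDegree_C_mul_le _ _) (by simp [hn])
    · rw [Polynomial.eval₂_add, Polynomial.eval₂_mul, Polynomial.eval₂_C,
        Polynomial.eval₂_C, Polynomial.eval₂_X]
      rw [eq_div_iff (phi_ne_zero (X_ne_zero 0)), add_mul, mul_assoc, tK,
        div_mul_cancel₀ _ (phi_ne_zero (X_ne_zero 0)), ← RingHom.map_mul, ← RingHom.map_mul, ← RingHom.map_add, hab]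
  · exact div_ne_zero (phi_ne_zero (Ppoly_ne_zero K i)) (phi_ne_zero (X_ne_zero 0))
  · rw [div_eq_mul_inv, hmul _ _ (phi_ne_zero (Ppoly_ne_zero K i))
      (inv_ne_zero (phi_ne_zero (X_ne_zero 0))),
      v_inv hmul (phi_ne_zero (X_ne_zero 0)), v_x hmul hβ, hβ i]
    ring

omit hmul


def BadIdx (m : ℚ) (i : ℕ) : Prop := ∃ z : ℤ, Odd z ∧ m * 2 ^ i = (z : ℚ)

lemma BadIdx_unique {m : ℚ} {i j : ℕ} (hi : BadIdx m i) (hj : BadIdx m j) : i = j := by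
  have key : ∀ i j : ℕ, i < j → BadIdx m i → BadIdx m j → False := by
    rintro i j hij ⟨z, hz, he⟩ ⟨w, hw, hwe⟩
    have h2 : (2:ℚ) ^ j = 2 ^ i * 2 ^ (j - i) := by rw [← pow_add]; congr 1; omega
    have : (w : ℚ) = (z * 2 ^ (j - i) : ℤ) := by
      push_cast
      rw [← hwe, h2, ← mul_assoc, he]
    have hw' : w = z * 2 ^ (j - i) := by exact_mod_cast this
    have hEv : Even w := by
      refine ⟨z * 2 ^ (j - i - 1), ?_⟩
      have h8 : (2:ℤ) ^ (j - i) = 2 ^ (j - i - 1) * 2 := by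
        rw [← pow_succ]; congr 1; omega
      rw [hw', h8]; ring
    exact (Int.not_odd_iff_even.mpr hEv) hw
  rcases Nat.lt_trichotomy i j with h | h | h
  · exact absurd (key i j h hi hj) (by simp)
  · exact h
  · exact absurd (key j i h hj hi) (by simp)

lemma not_fg_aux (M : Set ℚ) (hnn : ∀ q ∈ M, 0 ≤ q) (hmem : ∀ i : ℕ, betaSeq i - 1 ∈ M) :
    ¬ IsFinitelyGeneratedSemigroupModule
      {q : ℚ | ∃ l : ℕ →₀ ℕ, q = l.sum fun i k => (k : ℚ) * betaSeq i} M := by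
  classical
  rintro ⟨T, hT, hTeq⟩
  set F : ℚ → ℕ := fun m => if h : ∃ i, BadIdx m i then h.choose else 0 with hF
  set k := T.sup F with hk
  have hbad : ∀ m ∈ T, ¬ BadIdx m (k + 1) := by
    intro m hm hB
    have hex : ∃ i, BadIdx m i := ⟨_, hB⟩
    have hFm : F m = k + 1 := by
      rw [hF]
      simp only [hex, dif_pos]
      exact BadIdx_unique hex.choose_spec hB
    have := Finset.le_sup (f := F) hm
    rw [hFm, ← hk] at this
    omega
  have hmem' := hmem (k + 1)
  rw [hTeq] at hmem'
  simp only [Set.mem_iUnion, Set.mem_setOf_eq] at hmem'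
  obtain ⟨m, hmT, μ, ⟨l, rfl⟩, heq⟩ := hmem'
  by_cases hc : ∃ j ∈ l.support, k + 1 ≤ j
  · obtain ⟨j, hj, hkj⟩ := hc
    have h1 : betaSeq j ≤ l.sum fun i k => (k : ℚ) * betaSeq i := by
      rw [Finsupp.sum]
      calc betaSeq j ≤ (l j : ℚ) * betaSeq j := by
            have h5 : 1 ≤ (l j : ℚ) := by
              exact_mod_cast Nat.one_le_iff_ne_zero.mpr (Finsupp.mem_support_iff.mp hj)
            nlinarith [betaSeq_pos j]
        _ ≤ _ := Finset.single_le_sum (f := fun i => (l i : ℚ) * betaSeq i)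
            (fun i _ => by have := betaSeq_pos i; positivity) hj
    have h2 : betaSeq (k + 1) ≤ betaSeq j := betaSeq_mono hkj
    have h3 : 0 ≤ m := hnn m (hT hmT)
    linarith
  · push_neg at hc
    obtain ⟨z, hz⟩ : ∃ z : ℤ, (l.sum fun i k => (k : ℚ) * betaSeq i) * 2 ^ k = (z : ℚ) := by
      refine ⟨∑ j ∈ l.support, (l j : ℤ) * Nseq j * 2 ^ (k - j), ?_⟩
      rw [Finsupp.sum, Finset.sum_mul]
      push_cast
      refine Finset.sum_congr rfl fun j hj => ?_
      have hjk : j ≤ k := by have := hc j hj; omega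
      rw [betaSeq_eq]
      have h6 : (2:ℚ) ^ k = 2 ^ j * 2 ^ (k - j) := by rw [← pow_add]; congr 1; omega
      rw [h6]
      have : (2:ℚ) ^ j ≠ 0 := by positivity
      field_simp
    apply hbad m hmT
    refine ⟨Nseq (k+1) - 2 ^ (k+1) - 2 * z, ?_, ?_⟩
    · obtain ⟨c, hcc⟩ := Nseq_odd (k + 1)
      exact ⟨c - 2 ^ k - z, by rw [hcc, pow_succ]; ring⟩
    · have hm' : m = betaSeq (k + 1) - 1 - (l.sum fun i k => (k : ℚ) * betaSeq i) := by
        linarith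
      have key : ((Nseq (k+1) : ℚ)) = betaSeq (k+1) * 2 ^ (k+1) := by
        rw [betaSeq_eq]; field_simp
      rw [hm']
      push_cast
      rw [key]
      linear_combination (-2 : ℚ) * hz

lemma phiX_mem_adjoin (i : Fin 2) :
    algebraMap (MvPolynomial (Fin 2) K) (Kxy K) (X i) ∈
      Algebra.adjoin K ({algebraMap (MvPolynomial (Fin 2) K) (Kxy K) (X 0), tK K} :
        Set (Kxy K)) := by
  fin_cases i
  · exact Algebra.subset_adjoin (by simp)
  · show algebraMap (MvPolynomial (Fin 2) K) (Kxy K) (X 1) ∈ _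
    have : algebraMap (MvPolynomial (Fin 2) K) (Kxy K) (X 1) =
        algebraMap (MvPolynomial (Fin 2) K) (Kxy K) (X 0) * tK K := by
      rw [tK, mul_div_cancel₀ _ (phi_ne_zero (X_ne_zero 0))]
    rw [this]
    exact mul_mem (Algebra.subset_adjoin (by simp)) (Algebra.subset_adjoin (by simp))

lemma phiC_eq (r : K) : algebraMap (MvPolynomial (Fin 2) K) (Kxy K) (C r) =
    algebraMap K (Kxy K) r := by
  rw [IsScalarTower.algebraMap_apply K (MvPolynomial (Fin 2) K) (Kxy K), MvPolynomial.algebraMap_eq]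

lemma phi_mem_adjoin (f : MvPolynomial (Fin 2) K) :
    algebraMap (MvPolynomial (Fin 2) K) (Kxy K) f ∈
      Algebra.adjoin K ({algebraMap (MvPolynomial (Fin 2) K) (Kxy K) (X 0), tK K} :
        Set (Kxy K)) := by
  induction f using MvPolynomial.induction_on with
  | C k => rw [phiC_eq]; exact Subalgebra.algebraMap_mem _ k
  | add p q hp hq => rw [RingHom.map_add]; exact add_mem hp hq
  | mul_X p i hp => rw [RingHom.map_mul]; exact mul_mem hp (phiX_mem_adjoin i)

lemma mem_adjoin_iff (g : Kxy K) :
    g ∈ Algebra.adjoin K ({algebraMap (MvPolynomial (Fin 2) K) (Kxy K) (X 0), tK K} :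
        Set (Kxy K)) ↔
      ∃ p : Polynomial (MvPolynomial (Fin 2) K),
        Polynomial.eval₂ (algebraMap (MvPolynomial (Fin 2) K) (Kxy K)) (tK K) p = g := by
  constructor
  · intro hg
    induction hg using Algebra.adjoin_induction with
    | mem x hx =>
      rcases hx with hx | hx
      · exact ⟨Polynomial.C (X 0), by rw [Polynomial.eval₂_C, hx]⟩
      · exact ⟨Polynomial.X, by rw [Polynomial.eval₂_X]; exact hx.symm ▸ rfl⟩
    | algebraMap r => exact ⟨Polynomial.C (C r), by rw [Polynomial.eval₂_C, phiC_eq]⟩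
    | add x y hx hy ihx ihy =>
      obtain ⟨p, rfl⟩ := ihx; obtain ⟨q, rfl⟩ := ihy
      exact ⟨p + q, Polynomial.eval₂_add _ _⟩
    | mul x y hx hy ihx ihy =>
      obtain ⟨p, rfl⟩ := ihx; obtain ⟨q, rfl⟩ := ihy
      exact ⟨p * q, Polynomial.eval₂_mul _ _⟩
  · rintro ⟨p, rfl⟩
    induction p using Polynomial.induction_on with
    | C a => rw [Polynomial.eval₂_C]; exact phi_mem_adjoin a
    | add p q hp hq => rw [Polynomial.eval₂_add]; exact add_mem hp hq
    | monomial n a _ =>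
      rw [Polynomial.eval₂_mul, Polynomial.eval₂_C, Polynomial.eval₂_pow, Polynomial.eval₂_X]
      exact mul_mem (phi_mem_adjoin a) (pow_mem (Algebra.subset_adjoin (by simp)) _)

/-- For every `n ≥ 1`, `M_n` is not a finitely generated `M_0`-module; moreover
`M_∞ = ⋃_n M_n`, which is the set of values of `ν̄` on the nonzero elements of the ring
`K[x, y/x]`, is not a finitely generated `M_0`-module. -/
theorem Mn_not_finitely_generated
    (K : Type) [Field K] [IsAlgClosed K]
    (v : Kxy K → ℚ)
    (hmul : ∀ g h : Kxy K, g ≠ 0 → h ≠ 0 → v (g * h) = v g + v h)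
    (hadd : ∀ g h : Kxy K, g ≠ 0 → h ≠ 0 → g + h ≠ 0 → min (v g) (v h) ≤ v (g + h))
    (hnonneg : ∀ f : MvPolynomial (Fin 2) K, f ≠ 0 →
      0 ≤ v (algebraMap (MvPolynomial (Fin 2) K) (Kxy K) f))
    (hpos : ∀ f : MvPolynomial (Fin 2) K, f ≠ 0 → f ∈ Ideal.span {X 0, X 1} →
      0 < v (algebraMap (MvPolynomial (Fin 2) K) (Kxy K) f))
    (hβ : ∀ i : ℕ, v (algebraMap (MvPolynomial (Fin 2) K) (Kxy K) (Ppoly K i)) = betaSeq i)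
    (hM0 : Mset K v 0 = {q : ℚ | ∃ l : ℕ →₀ ℕ, q = l.sum fun i k => (k : ℚ) * betaSeq i}) :
    (∀ n : ℕ, 1 ≤ n → ¬ IsFinitelyGeneratedSemigroupModule (Mset K v 0) (Mset K v n)) ∧
    (⋃ n : ℕ, Mset K v n) =
      {q : ℚ | ∃ g ∈ Algebra.adjoin K
        ({algebraMap (MvPolynomial (Fin 2) K) (Kxy K) (X 0),
          algebraMap (MvPolynomial (Fin 2) K) (Kxy K) (X 1) /
            algebraMap (MvPolynomial (Fin 2) K) (Kxy K) (X 0)} : Set (Kxy K)),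
        g ≠ 0 ∧ v g = q} ∧
    ¬ IsFinitelyGeneratedSemigroupModule (Mset K v 0) (⋃ n : ℕ, Mset K v n) := by
  constructor
  · intro n hn
    rw [hM0]
    refine not_fg_aux _ (fun q hq => ?_) (beta_sub_one_mem hmul hβ hn)
    obtain ⟨g, hgW, hg0, rfl⟩ := hq
    exact Mset_nonneg hmul hadd hnonneg hβ hgW hg0
  constructor
  · ext q
    simp only [Set.mem_iUnion, Set.mem_setOf_eq]
    constructor
    · rintro ⟨n, g, hgW, hg0, rfl⟩
      obtain ⟨p, hdeg, rfl⟩ := (mem_Wset_iff n g).mp hgW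
      exact ⟨_, (mem_adjoin_iff _).mpr ⟨p, rfl⟩, hg0, rfl⟩
    · rintro ⟨g, hgA, hg0, rfl⟩
      obtain ⟨p, rfl⟩ := (mem_adjoin_iff g).mp hgA
      exact ⟨p.natDegree, _, (mem_Wset_iff _ _).mpr ⟨p, le_refl _, rfl⟩, hg0, rfl⟩
  · rw [hM0]
    refine not_fg_aux _ (fun q hq => ?_) (fun i => Set.mem_iUnion.mpr ⟨1, beta_sub_one_mem hmul hβ le_rfl i⟩)
    obtain ⟨_, ⟨n, rfl⟩, g, hgW, hg0, rfl⟩ := hq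
    exact Mset_nonneg hmul hadd hnonneg hβ hgW hg0
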